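/- If W ∈ ℤ[B_n] lies in I^{(m)}, the m-th power of the ideal generated by {σ_i − σ_i^{−1}}, then every entry of K(W), written as a polynomial in (t+1) and (q−1), has lowest total degree at least m. -/

import Mathlib

open Matrix

noncomputable section

/-- Braid relations among the Artin generators `σ_1, …, σ_{n-1}`
(indexed here by `Fin (n-1)`, with `i : Fin (n-1)` standing for `σ_{i+1}`). -/
def braidRels (n : ℕ) : Set (FreeGroup (Fin (n - 1))) :=
  {r | (∃ i j : Fin (n - 1), (i : ℕ) + 1 = (j : ℕ) ∧
          r = .of i * .of j * .of i * (.of j * .of i * .of j)⁻¹) ∨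
       (∃ i j : Fin (n - 1), (i : ℕ) + 2 ≤ (j : ℕ) ∧
          r = .of i * .of j * (.of j * .of i)⁻¹)}

/-- The braid group `B_n` as a presented group. -/
abbrev Braid (n : ℕ) := PresentedGroup (braidRels n)

/-- The Artin generator `σ_{i+1}` of `B_n`. -/
def σg {n : ℕ} (i : Fin (n - 1)) : Braid n := PresentedGroup.of i

/-- Index set `{(i,j) : 1 ≤ i < j ≤ n}` for the Lawrence–Krammer basis `X_{i,j}`. -/
abbrev BP (n : ℕ) := {p : Fin (n + 1) × Fin (n + 1) // 0 < (p.1 : ℕ) ∧ (p.1 : ℕ) < (p.2 : ℕ)}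

/-- The standard basis row vector `X_{a,b}`. -/
def ee {R : Type*} [CommRing R] (n a b : ℕ) : BP n → R :=
  fun c => if (c.val.1 : ℕ) = a ∧ (c.val.2 : ℕ) = b then 1 else 0

/-- The Lawrence–Krammer matrix of the Artin generator `σ_m` (1-based `m`),
with parameters `t`, `q`; row `(i,j)` is the expansion of `X_{i,j}·σ_m` in the basis. -/
def LKgen {R : Type*} [CommRing R] (t q : R) (n m : ℕ) : Matrix (BP n) (BP n) R :=
  fun r c =>
    let i := (r.val.1 : ℕ); let j := (r.val.2 : ℕ)
    if m = i ∧ j = i + 1 then -(t * q ^ 2) * ee n i j c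
    else if m = i then
      q * ee n (i + 1) j c + (1 - q) * ee n i j c + t * q * (1 - q) * ee n i (i + 1) c
    else if m = j then
      q * ee n i (j + 1) c + (1 - q) * ee n i j c - q * (1 - q) * ee n j (j + 1) c
    else if m + 1 = i then ee n (i - 1) j c
    else if m + 1 = j then ee n i (j - 1) c
    else ee n i j c

/-- The field `ℚ(t,q)` of rational functions in two variables. -/
abbrev F2 := FractionRing (MvPolynomial (Fin 2) ℚ)

/-- The variable `t` in `ℚ(t,q)`. -/
def tt : F2 := algebraMap (MvPolynomial (Fin 2) ℚ) F2 (MvPolynomial.X 0)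

/-- The variable `q` in `ℚ(t,q)`. -/
def qq : F2 := algebraMap (MvPolynomial (Fin 2) ℚ) F2 (MvPolynomial.X 1)

/-- The power-series ring `ℚ[[t+1, q−1]]`: power series in `u = t+1` and `v = q−1`. -/
abbrev PS := MvPowerSeries (Fin 2) ℚ

/-- The variable `t = u − 1` in `ℚ[[u,v]]`, where `u = t + 1`. -/
def tP : PS := MvPowerSeries.X 0 - 1

/-- The variable `q = v + 1` in `ℚ[[u,v]]`, where `v = q − 1`. -/
def qP : PS := MvPowerSeries.X 1 + 1

/-- The `m`-th power `I^(m)` of the two-sided ideal of the group ring `ℤ[B_n]` generated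
by the elements `σ_i − σ_i⁻¹`, described as the `ℤ`-span of products with `m` factors
`σ_i − σ_i⁻¹` interleaved with arbitrary group ring elements. -/
def Ipow (n : ℕ) : ℕ → Submodule ℤ (MonoidAlgebra ℤ (Braid n))
  | 0 => ⊤
  | m + 1 =>
    Submodule.span ℤ
      {x | ∃ w ∈ Ipow n m, ∃ (i : Fin (n - 1)) (a : MonoidAlgebra ℤ (Braid n)),
        x = w * (MonoidAlgebra.of ℤ (Braid n) (σg i) -
                 MonoidAlgebra.of ℤ (Braid n) ((σg i)⁻¹)) * a}


namespace LKProofAux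

/-- Constant coefficient homomorphism. -/
abbrev cc : PS →+* ℚ := MvPowerSeries.constantCoeff

lemma cc_tP : cc tP = -1 := by simp [tP, cc]

lemma cc_qP : cc qP = 1 := by simp [qP, cc]

/-- The transposition `k ↔ k+1` on natural numbers. -/
def gsw (k x : ℕ) : ℕ := if x = k then k + 1 else if x = k + 1 then k else x

lemma gsw_le {k x n : ℕ} (hk : k + 1 ≤ n) (hx : x ≤ n) : gsw k x ≤ n := by
  unfold gsw; split_ifs <;> omega

lemma gsw_pos {k x : ℕ} (hk : 1 ≤ k) (hx : 1 ≤ x) : 1 ≤ gsw k x := by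
  unfold gsw; split_ifs <;> omega

lemma gsw_inj {k x y : ℕ} (h : gsw k x = gsw k y) : x = y := by
  unfold gsw at h; split_ifs at h <;> omega

lemma gsw_gsw (k x : ℕ) : gsw k (gsw k x) = x := by
  unfold gsw; split_ifs <;> omega

/-- The induced involution on the index set `BP n`. -/
def swp (n k : ℕ) (hk1 : 1 ≤ k) (hk2 : k + 1 ≤ n) (r : BP n) : BP n := by
  have ha : (r.1.1 : ℕ) ≤ n := Nat.lt_succ_iff.mp r.1.1.isLt
  have hb : (r.1.2 : ℕ) ≤ n := Nat.lt_succ_iff.mp r.1.2.isLt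
  have h1 := gsw_le (x := (r.1.1 : ℕ)) hk2 ha
  have h2 := gsw_le (x := (r.1.2 : ℕ)) hk2 hb
  have hp1 : 1 ≤ gsw k (r.1.1 : ℕ) := gsw_pos hk1 r.2.1
  have hp2 : 1 ≤ gsw k (r.1.2 : ℕ) := gsw_pos hk1 (by have := r.2; omega)
  have hne : gsw k (r.1.1 : ℕ) ≠ gsw k (r.1.2 : ℕ) := by
    intro h; have := gsw_inj h; have := r.2.2; omega
  refine ⟨(⟨min (gsw k (r.1.1 : ℕ)) (gsw k (r.1.2 : ℕ)), by omega⟩,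
          ⟨max (gsw k (r.1.1 : ℕ)) (gsw k (r.1.2 : ℕ)), by omega⟩), ?_, ?_⟩
  · show 0 < min (gsw k (r.1.1 : ℕ)) (gsw k (r.1.2 : ℕ))
    omega
  · show min (gsw k (r.1.1 : ℕ)) (gsw k (r.1.2 : ℕ))
        < max (gsw k (r.1.1 : ℕ)) (gsw k (r.1.2 : ℕ))
    omega

lemma swp_fst (n k : ℕ) (hk1 : 1 ≤ k) (hk2 : k + 1 ≤ n) (r : BP n) :
    ((swp n k hk1 hk2 r).1.1 : ℕ) = min (gsw k (r.1.1 : ℕ)) (gsw k (r.1.2 : ℕ)) := rfl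

lemma swp_snd (n k : ℕ) (hk1 : 1 ≤ k) (hk2 : k + 1 ≤ n) (r : BP n) :
    ((swp n k hk1 hk2 r).1.2 : ℕ) = max (gsw k (r.1.1 : ℕ)) (gsw k (r.1.2 : ℕ)) := rfl

lemma bp_ext {n : ℕ} {p c : BP n} (h1 : (p.1.1 : ℕ) = (c.1.1 : ℕ))
    (h2 : (p.1.2 : ℕ) = (c.1.2 : ℕ)) : p = c := by
  apply Subtype.ext; apply Prod.ext <;> [exact Fin.ext h1; exact Fin.ext h2]

lemma swp_swp (n k : ℕ) (hk1 : 1 ≤ k) (hk2 : k + 1 ≤ n) (r : BP n) :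
    swp n k hk1 hk2 (swp n k hk1 hk2 r) = r := by
  have hij : (r.1.1 : ℕ) < (r.1.2 : ℕ) := r.2.2
  apply bp_ext
  · rw [swp_fst n k hk1 hk2 (swp n k hk1 hk2 r), swp_fst n k hk1 hk2 r,
      swp_snd n k hk1 hk2 r]
    rcases le_total (gsw k (r.1.1 : ℕ)) (gsw k (r.1.2 : ℕ)) with h | h
    · rw [min_eq_left h, max_eq_right h, gsw_gsw, gsw_gsw]; omega
    · rw [min_eq_right h, max_eq_left h, gsw_gsw, gsw_gsw]; omega
  · rw [swp_snd n k hk1 hk2 (swp n k hk1 hk2 r), swp_fst n k hk1 hk2 r,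
      swp_snd n k hk1 hk2 r]
    rcases le_total (gsw k (r.1.1 : ℕ)) (gsw k (r.1.2 : ℕ)) with h | h
    · rw [min_eq_left h, max_eq_right h, gsw_gsw, gsw_gsw]; omega
    · rw [min_eq_right h, max_eq_left h, gsw_gsw, gsw_gsw]; omega

lemma ee_eq {n : ℕ} (a b : ℕ) (p c : BP n) (h1 : (p.1.1 : ℕ) = a) (h2 : (p.1.2 : ℕ) = b) :
    (ee n a b c : ℚ) = if p = c then 1 else 0 := by
  have : ((c.1.1 : ℕ) = a ∧ (c.1.2 : ℕ) = b) ↔ p = c := by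
    constructor
    · rintro ⟨e1, e2⟩; exact bp_ext (by omega) (by omega)
    · rintro rfl; exact ⟨h1.symm ▸ rfl, h2.symm ▸ rfl⟩
  rw [ee, if_congr this rfl rfl]

lemma LK_spec (n k : ℕ) (hk1 : 1 ≤ k) (hk2 : k + 1 ≤ n) (r c : BP n) :
    LKgen (-1 : ℚ) 1 n k r c = if swp n k hk1 hk2 r = c then 1 else 0 := by
  have hij : (r.1.1 : ℕ) < (r.1.2 : ℕ) := r.2.2
  have hi0 : 0 < (r.1.1 : ℕ) := r.2.1
  have hjn : (r.1.2 : ℕ) ≤ n := Nat.lt_succ_iff.mp r.1.2.isLt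
  rw [← ee_eq ((swp n k hk1 hk2 r).1.1 : ℕ) ((swp n k hk1 hk2 r).1.2 : ℕ)
      (swp n k hk1 hk2 r) c rfl rfl]
  simp only [LKgen]
  split_ifs with hc1 hc2 hc3 hc4 hc5
  · obtain ⟨ec1, ec2⟩ := hc1
    have e1 : ((swp n k hk1 hk2 r).1.1 : ℕ) = (r.1.1 : ℕ) := by
      rw [swp_fst n k hk1 hk2 r]; unfold gsw; split_ifs <;> omega
    have e2 : ((swp n k hk1 hk2 r).1.2 : ℕ) = (r.1.2 : ℕ) := by
      rw [swp_snd n k hk1 hk2 r]; unfold gsw; split_ifs <;> omega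
    rw [e1, e2]
    all_goals norm_num
  · have e1 : ((swp n k hk1 hk2 r).1.1 : ℕ) = (r.1.1 : ℕ) + 1 := by
      rw [swp_fst n k hk1 hk2 r]; unfold gsw; split_ifs <;> omega
    have e2 : ((swp n k hk1 hk2 r).1.2 : ℕ) = (r.1.2 : ℕ) := by
      rw [swp_snd n k hk1 hk2 r]; unfold gsw; split_ifs <;> omega
    rw [e1, e2]
    all_goals norm_num
  · have e1 : ((swp n k hk1 hk2 r).1.1 : ℕ) = (r.1.1 : ℕ) := by
      rw [swp_fst n k hk1 hk2 r]; unfold gsw; split_ifs <;> omega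
    have e2 : ((swp n k hk1 hk2 r).1.2 : ℕ) = (r.1.2 : ℕ) + 1 := by
      rw [swp_snd n k hk1 hk2 r]; unfold gsw; split_ifs <;> omega
    rw [e1, e2]
    all_goals norm_num
  · have e1 : ((swp n k hk1 hk2 r).1.1 : ℕ) = (r.1.1 : ℕ) - 1 := by
      rw [swp_fst n k hk1 hk2 r]; unfold gsw; split_ifs <;> omega
    have e2 : ((swp n k hk1 hk2 r).1.2 : ℕ) = (r.1.2 : ℕ) := by
      rw [swp_snd n k hk1 hk2 r]; unfold gsw; split_ifs <;> omega
    rw [e1, e2]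
    all_goals norm_num
  · have e1 : ((swp n k hk1 hk2 r).1.1 : ℕ) = (r.1.1 : ℕ) := by
      rw [swp_fst n k hk1 hk2 r]; unfold gsw; split_ifs <;> omega
    have e2 : ((swp n k hk1 hk2 r).1.2 : ℕ) = (r.1.2 : ℕ) - 1 := by
      rw [swp_snd n k hk1 hk2 r]; unfold gsw; split_ifs <;> omega
    rw [e1, e2]
    all_goals norm_num
  · have e1 : ((swp n k hk1 hk2 r).1.1 : ℕ) = (r.1.1 : ℕ) := by
      rw [swp_fst n k hk1 hk2 r]; unfold gsw; split_ifs <;> omega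
    have e2 : ((swp n k hk1 hk2 r).1.2 : ℕ) = (r.1.2 : ℕ) := by
      rw [swp_snd n k hk1 hk2 r]; unfold gsw; split_ifs <;> omega
    rw [e1, e2]
    all_goals norm_num

lemma LK_sq (n k : ℕ) (hk1 : 1 ≤ k) (hk2 : k + 1 ≤ n) :
    LKgen (-1 : ℚ) 1 n k * LKgen (-1 : ℚ) 1 n k = 1 := by
  ext r c
  rw [Matrix.mul_apply]
  simp only [LK_spec n k hk1 hk2, ite_mul, one_mul, zero_mul]
  rw [Finset.sum_ite_eq]
  simp [swp_swp, Matrix.one_apply]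

lemma cc_LK (n k : ℕ) (r c : BP n) :
    cc (LKgen tP qP n k r c) = LKgen (-1 : ℚ) 1 n k r c := by
  simp only [LKgen]
  split_ifs <;>
    simp [ee, apply_ite cc, cc_tP, cc_qP] <;> norm_num

lemma cc_diff (n : ℕ) (K : Braid n →* GL (BP n) PS)
    (hK : ∀ m : Fin (n - 1),
      (K (σg m) : Matrix (BP n) (BP n) PS) = LKgen tP qP n ((m : ℕ) + 1))
    (i : Fin (n - 1)) (r c : BP n) :
    cc ((K (σg i) : Matrix (BP n) (BP n) PS) r c
        - (K ((σg i)⁻¹) : Matrix (BP n) (BP n) PS) r c) = 0 := by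
  have hk1 : 1 ≤ (i : ℕ) + 1 := le_add_self
  have hk2 : (i : ℕ) + 1 + 1 ≤ n := by have := i.isLt; omega
  have hA : ((K (σg i) : Matrix (BP n) (BP n) PS)).map cc = LKgen (-1 : ℚ) 1 n ((i : ℕ) + 1) := by
    rw [hK i]; ext r' c'; exact cc_LK n _ r' c'
  have hsq := LK_sq n ((i : ℕ) + 1) hk1 hk2
  have hAB : (K (σg i) : Matrix (BP n) (BP n) PS)
      * (K ((σg i)⁻¹) : Matrix (BP n) (BP n) PS) = 1 := by
    rw [map_inv]
    exact Units.mul_inv _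
  have hmap : ((K (σg i) : Matrix (BP n) (BP n) PS)).map cc
      * ((K ((σg i)⁻¹) : Matrix (BP n) (BP n) PS)).map cc = 1 := by
    rw [← Matrix.map_mul, hAB, Matrix.map_one cc (map_zero cc) (map_one cc)]
  rw [hA] at hmap
  have hB : ((K ((σg i)⁻¹) : Matrix (BP n) (BP n) PS)).map cc
      = LKgen (-1 : ℚ) 1 n ((i : ℕ) + 1) := by
    calc ((K ((σg i)⁻¹) : Matrix (BP n) (BP n) PS)).map cc
        = (LKgen (-1 : ℚ) 1 n ((i : ℕ) + 1) * LKgen (-1 : ℚ) 1 n ((i : ℕ) + 1))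
            * ((K ((σg i)⁻¹) : Matrix (BP n) (BP n) PS)).map cc := by rw [hsq, one_mul]
      _ = LKgen (-1 : ℚ) 1 n ((i : ℕ) + 1) := by rw [mul_assoc, hmap, mul_one]
  have h1 : cc ((K (σg i) : Matrix (BP n) (BP n) PS) r c)
      = LKgen (-1 : ℚ) 1 n ((i : ℕ) + 1) r c := congrFun (congrFun hA r) c
  have h2 : cc ((K ((σg i)⁻¹) : Matrix (BP n) (BP n) PS) r c)
      = LKgen (-1 : ℚ) 1 n ((i : ℕ) + 1) r c := congrFun (congrFun hB r) c
  rw [map_sub, h1, h2, sub_self]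

lemma good_mul {ι : Type*} [Fintype ι] [DecidableEq ι] {M N : Matrix ι ι PS} {a b : ℕ}
    (hM : ∀ (r c : ι) (d : Fin 2 →₀ ℕ), d 0 + d 1 < a → MvPowerSeries.coeff d (M r c) = 0)
    (hN : ∀ (r c : ι) (d : Fin 2 →₀ ℕ), d 0 + d 1 < b → MvPowerSeries.coeff d (N r c) = 0) :
    ∀ (r c : ι) (d : Fin 2 →₀ ℕ), d 0 + d 1 < a + b →
      MvPowerSeries.coeff d ((M * N) r c) = 0 := by
  intro r c d hd
  rw [Matrix.mul_apply, map_sum]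
  refine Finset.sum_eq_zero fun p _ => ?_
  rw [MvPowerSeries.coeff_mul]
  refine Finset.sum_eq_zero fun e he => ?_
  have hde : e.1 + e.2 = d := Finset.HasAntidiagonal.mem_antidiagonal.mp he
  have h0 : e.1 0 + e.2 0 = d 0 := by rw [← hde]; simp
  have h1 : e.1 1 + e.2 1 = d 1 := by rw [← hde]; simp
  by_cases h : e.1 0 + e.1 1 < a
  · rw [hM _ _ _ h, zero_mul]
  · rw [hN _ _ _ (by omega), mul_zero]

lemma key (n : ℕ) (K : Braid n →* GL (BP n) PS)
    (hK : ∀ m : Fin (n - 1),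
      (K (σg m) : Matrix (BP n) (BP n) PS) = LKgen tP qP n ((m : ℕ) + 1)) :
    ∀ (m : ℕ) (W : MonoidAlgebra ℤ (Braid n)), W ∈ Ipow n m →
      ∀ (r c : BP n) (d : Fin 2 →₀ ℕ), d 0 + d 1 < m →
        MvPowerSeries.coeff d
          ((MonoidAlgebra.lift ℤ (Matrix (BP n) (BP n) PS) (Braid n)
              ((Units.coeHom (Matrix (BP n) (BP n) PS)).comp K) W) r c) = 0 := by
  intro m
  induction m with
  | zero => intro W _ r c d hd; omega
  | succ m ih =>
    intro W hW
    rw [Ipow] at hW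
    refine Submodule.span_induction ?_ ?_ ?_ ?_ hW
    · rintro x ⟨w, hw, i, a, rfl⟩
      intro r c d hd
      set L := MonoidAlgebra.lift ℤ (Matrix (BP n) (BP n) PS) (Braid n)
        ((Units.coeHom (Matrix (BP n) (BP n) PS)).comp K) with hL
      rw [_root_.map_mul, _root_.map_mul, _root_.map_sub]
      have hmid : ∀ (r c : BP n) (d : Fin 2 →₀ ℕ), d 0 + d 1 < 1 →
          MvPowerSeries.coeff d
            ((L (MonoidAlgebra.of ℤ (Braid n) (σg i))
              - L (MonoidAlgebra.of ℤ (Braid n) ((σg i)⁻¹))) r c) = 0 := by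
        intro r c d hd
        have hd0 : d = 0 := by
          have e0 : d 0 = 0 := by omega
          have e1 : d 1 = 0 := by omega
          ext x
          fin_cases x
          · exact e0
          · exact e1
        subst hd0
        rw [MvPowerSeries.coeff_zero_eq_constantCoeff_apply]
        have hof : ∀ g : Braid n, L (MonoidAlgebra.of ℤ (Braid n) g)
            = (K g : Matrix (BP n) (BP n) PS) := by
          intro g; rw [hL, MonoidAlgebra.lift_of]; rfl
        rw [hof, hof, Matrix.sub_apply]
        exact cc_diff n K hK i r c
      have hlast : ∀ (r c : BP n) (d : Fin 2 →₀ ℕ), d 0 + d 1 < 0 →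
          MvPowerSeries.coeff d ((L a) r c) = 0 := by
        intro r c d hd; omega
      exact good_mul (good_mul (ih w hw) hmid) hlast r c d (by omega)
    · intro r c d hd; simp
    · intro x y _ _ hx hy r c d hd
      rw [_root_.map_add]
      rw [Matrix.add_apply, _root_.map_add, hx r c d hd, hy r c d hd, add_zero]
    · intro z x _ hx r c d hd
      rw [_root_.map_smul, Matrix.smul_apply, map_zsmul, hx r c d hd, smul_zero]

end LKProofAux

/-- If `W ∈ I^(m)`, then every entry of `K(W)`, expanded as a power
series in `(t+1)` and `(q−1)`, has lowest total degree at least `m`: all coefficients of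
total degree `< m` vanish. -/
theorem lk_ideal_power_low_degree (n : ℕ) (K : Braid n →* GL (BP n) PS)
    (hK : ∀ m : Fin (n - 1),
      (K (σg m) : Matrix (BP n) (BP n) PS) = LKgen tP qP n ((m : ℕ) + 1))
    (m : ℕ) (W : MonoidAlgebra ℤ (Braid n)) (hW : W ∈ Ipow n m) (r c : BP n)
    (d : Fin 2 →₀ ℕ) (hd : d 0 + d 1 < m) :
    MvPowerSeries.coeff d
      ((MonoidAlgebra.lift ℤ (Matrix (BP n) (BP n) PS) (Braid n)
          ((Units.coeHom (Matrix (BP n) (BP n) PS)).comp K) W) r c) = 0 := by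
  exact LKProofAux.key n K hK m W hW r c d hd
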